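/- Let D=(V,E) be a countable directed graph and let (V_i)_{i ∈ ℕ} be a partition of V such that: (a) for each i there exists an injection φ_i : V_i → ℕ such that the induced subgraph D[V_i] contains no infinite increasing directed path with respect to φ_i; and (b) for every i and every x ∈ V_i the set {y ∈ ⋃_{j>i} V_j : (x,y) ∈ E} is finite. Then there exists an injection φ: V → ℕ such that D contains no infinite increasing directed path with respect to φ. -/

import Mathlib

namespace Stmt18Aux

open List

theorem nat_no_strict_anti (g : ℕ → ℕ) (h : ∀ n, g (n + 1) < g n) : False := by
  have key : ∀ n, g n + n ≤ g 0 := by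
    intro n
    induction n with
    | zero => simp
    | succ n ih => have := h n; omega
  have := key (g 0 + 1); omega

theorem nat_mono_stab {g : ℕ → ℕ} (mono : Monotone g) (hbd : ∃ C, ∀ n, g n ≤ C) :
    ∃ N, ∀ n, N ≤ n → g n = g N := by
  by_contra h
  push_neg at h
  have step : ∀ N, ∃ n, g N < g n := by
    intro N
    obtain ⟨n, hn, hne⟩ := h N
    exact ⟨n, lt_of_le_of_ne (mono hn) (Ne.symm hne)⟩
  obtain ⟨C, hC⟩ := hbd
  have key : ∀ k, ∃ n, k ≤ g n := by
    intro k
    induction k with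
    | zero => exact ⟨0, Nat.zero_le _⟩
    | succ k ih =>
      obtain ⟨n, hn⟩ := ih
      obtain ⟨m, hm⟩ := step n
      exact ⟨m, by omega⟩
  obtain ⟨n, hn⟩ := key (C + 1)
  have := hC n; omega


variable {V : Type*}

section Defs

variable (E : Set (V × V)) (P : V → ℕ) (Φ : ℕ → V → ℕ)

/-- forward (cross-up) out-neighbours -/
def Ffwd (v : V) : Set V := {y | (v, y) ∈ E ∧ P v < P y}

/-- same-class vertices with smaller label -/
def Lset (v : V) : Set V := {y | P y = P v ∧ Φ (P v) y < Φ (P v) v}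

def Gset (v : V) : Set V := Ffwd E P v ∪ Lset P Φ v

/-- `v` has an in-neighbour among the already placed vertices -/
def Pois (ℓ : List V) (v : V) : Prop := ∃ y ∈ ℓ, (y, v) ∈ E

/-- `c` is a "requirement child" of `p` -/
def stepR (ℓ : List V) (c p : V) : Prop :=
  Pois E ℓ p ∧ c ∈ Gset E P Φ p ∧ c ∉ ℓ

/-- requirement closure of `x` -/
def reachS (ℓ : List V) (x : V) : Set V :=
  {u | Relation.ReflTransGen (fun a b => stepR E P Φ ℓ b a) x u}

/-- the sorting order for the poisoned part of a batch: class descending,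
then label ascending -/
def rr (u v : V) : Prop := P v < P u ∨ (P u = P v ∧ Φ (P u) u ≤ Φ (P v) v)

end Defs

section Lemmas

variable {E : Set (V × V)} {P : V → ℕ} {Φ : ℕ → V → ℕ}

theorem lset_finite (hInj : ∀ i, Set.InjOn (Φ i) {v | P v = i}) (v : V) :
    (Lset P Φ v).Finite := by
  apply Set.Finite.of_finite_image (f := Φ (P v))
  · apply Set.Finite.subset (Set.finite_Iio (Φ (P v) v))
    rintro _ ⟨y, hy, rfl⟩
    exact hy.2
  · exact (hInj (P v)).mono (fun y hy => hy.1)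

theorem gset_finite (hFin : ∀ v, (Ffwd E P v).Finite)
    (hInj : ∀ i, Set.InjOn (Φ i) {v | P v = i}) (v : V) :
    (Gset E P Φ v).Finite :=
  (hFin v).union (lset_finite hInj v)

theorem P_le_of_gset {u v : V} (h : u ∈ Gset E P Φ v) : P v ≤ P u := by
  rcases h with h | h
  · exact le_of_lt h.2
  · exact le_of_eq h.1.symm

theorem no_descending_chain (hFin : ∀ v, (Ffwd E P v).Finite) (ℓ : List V) :
    ¬ ∃ f : ℕ → V, ∀ n, stepR E P Φ ℓ (f (n + 1)) (f n) := by
  rintro ⟨f, hf⟩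
  have mono : Monotone fun n => P (f n) :=
    monotone_nat_of_le_succ fun n => P_le_of_gset (hf n).2.1
  by_cases hbd : ∃ C, ∀ n, P (f n) ≤ C
  · -- bounded: eventually constant class, then labels strictly decrease: impossible
    obtain ⟨N, hN⟩ := nat_mono_stab mono hbd
    have hL : ∀ n, N ≤ n → f (n + 1) ∈ Lset P Φ (f n) := by
      intro n hn
      rcases (hf n).2.1 with h | h
      · exfalso
        have h1 := hN n hn
        have h2 := hN (n + 1) (by omega)
        have := h.2
        omega
      · exact h
    have hPf : ∀ n, N ≤ n → P (f n) = P (f N) := fun n hn => hN n hn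
    apply nat_no_strict_anti (fun k => Φ (P (f N)) (f (N + k)))
    intro k
    have h1 := hL (N + k) (by omega)
    have h2 : P (f (N + k)) = P (f N) := hPf _ (by omega)
    have : Φ (P (f (N + k))) (f (N + k + 1)) < Φ (P (f (N + k))) (f (N + k)) := h1.2
    rw [h2] at this
    have harr : N + k + 1 = N + (k + 1) := by omega
    rw [harr] at this
    exact this
  · push_neg at hbd
    classical
    -- unbounded: eventually the class exceeds every class in ℓ; poisoning edges
    -- are then cross-up edges from the finite list ℓ, landing in a finite set.
    set M := ℓ.toFinset.sup P with hM
    have hMle : ∀ y ∈ ℓ, P y ≤ M := fun y hy => Finset.le_sup (List.mem_toFinset.2 hy)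
    have hB : (⋃ y ∈ (ℓ : List V).toFinset, Ffwd E P y).Finite :=
      Set.Finite.biUnion (ℓ.toFinset.finite_toSet) fun y _ => hFin y
    obtain ⟨C0, hC0⟩ := (hB.image P).bddAbove
    obtain ⟨n, hn⟩ := hbd (max M C0)
    obtain ⟨y, hyl, hyE⟩ := (hf n).1
    have hyM : P y ≤ M := hMle y hyl
    have hFy : f n ∈ Ffwd E P y := ⟨hyE, by omega⟩
    have hmem : P (f n) ∈ P '' (⋃ y ∈ (ℓ : List V).toFinset, Ffwd E P y) :=
      ⟨f n, Set.mem_biUnion (List.mem_toFinset.2 hyl) hFy, rfl⟩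
    have := hC0 hmem
    omega


theorem wf_of_no_chain {α : Type*} {r : α → α → Prop}
    (h : ¬ ∃ f : ℕ → α, ∀ n, r (f (n + 1)) (f n)) : WellFounded r := by
  by_contra hwf
  apply h
  have hex : ∃ a, ¬ Acc r a := by
    by_contra hall
    push_neg at hall
    exact hwf ⟨fun a => hall a⟩
  obtain ⟨a, ha⟩ := hex
  have step : ∀ b : α, ¬ Acc r b → ∃ c, r c b ∧ ¬ Acc r c := by
    intro b hb
    by_contra hc
    push_neg at hc
    exact hb (Acc.intro b fun c hcb => hc c hcb)
  let F : {b : α // ¬ Acc r b} → {b : α // ¬ Acc r b} :=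
    fun b => ⟨(step b.1 b.2).choose, (step b.1 b.2).choose_spec.2⟩
  let g : ℕ → {b : α // ¬ Acc r b} := fun n => F^[n] ⟨a, ha⟩
  refine ⟨fun n => (g n).1, fun n => ?_⟩
  show r (g (n + 1)).1 (g n).1
  have hg : g (n + 1) = F (g n) := Function.iterate_succ_apply' F n _
  rw [hg]
  exact (step (g n).1 (g n).2).choose_spec.1

theorem wf_stepR (hFin : ∀ v, (Ffwd E P v).Finite) (ℓ : List V) :
    WellFounded (stepR E P Φ ℓ) :=
  wf_of_no_chain (no_descending_chain hFin ℓ)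

theorem reach_self (ℓ : List V) (x : V) : x ∈ reachS E P Φ ℓ x :=
  Relation.ReflTransGen.refl

theorem reach_tail {ℓ : List V} {x u g : V} (hu : u ∈ reachS E P Φ ℓ x)
    (h : stepR E P Φ ℓ g u) : g ∈ reachS E P Φ ℓ x :=
  Relation.ReflTransGen.tail hu h

theorem reach_not_mem {ℓ : List V} {x u : V} (hx : x ∉ ℓ)
    (hu : u ∈ reachS E P Φ ℓ x) : u ∉ ℓ := by
  induction hu with
  | refl => exact hx
  | tail _ h ih => exact h.2.2

theorem reach_finite (hFin : ∀ v, (Ffwd E P v).Finite)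
    (hInj : ∀ i, Set.InjOn (Φ i) {v | P v = i}) (ℓ : List V) (x : V) :
    (reachS E P Φ ℓ x).Finite := by
  refine WellFounded.induction (r := stepR E P Φ ℓ) (wf_stepR hFin ℓ)
    (C := fun x => (reachS E P Φ ℓ x).Finite) x ?_
  intro x IH
  have hsub : reachS E P Φ ℓ x ⊆
      insert x (⋃ c ∈ {c : V | stepR E P Φ ℓ c x}, reachS E P Φ ℓ c) := by
    intro u hu
    rcases Relation.ReflTransGen.cases_head hu with rfl | ⟨c, hc, hcu⟩
    · exact Set.mem_insert _ _
    · exact Set.mem_insert_of_mem _ (Set.mem_biUnion hc hcu)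
  refine Set.Finite.subset (Set.Finite.insert x (Set.Finite.biUnion ?_ fun c hc => IH c hc)) hsub
  exact (gset_finite hFin hInj x).subset (fun c hc => hc.2.1)

theorem rr_total (P : V → ℕ) (Φ : ℕ → V → ℕ) : ∀ u v : V, rr P Φ u v ∨ rr P Φ v u := by
  intro u v
  rcases lt_trichotomy (P u) (P v) with h | h | h
  · right; left; exact h
  · rcases le_total (Φ (P u) u) (Φ (P v) v) with h' | h'
    · left; right; exact ⟨h, h'⟩
    · right; right; exact ⟨h.symm, by rw [h] at h' ⊢; exact h'⟩
  · left; left; exact h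

theorem rr_trans (P : V → ℕ) (Φ : ℕ → V → ℕ) :
    ∀ u v w : V, rr P Φ u v → rr P Φ v w → rr P Φ u w := by
  rintro u v w (h1 | ⟨h1, h1'⟩) (h2 | ⟨h2, h2'⟩)
  · left; omega
  · left; omega
  · left; omega
  · right
    refine ⟨h1.trans h2, ?_⟩
    rw [h1, h2] at h1'
    rw [h2] at h2'
    rw [h1, h2]
    exact h1'.trans h2'

theorem rr_antisymm (hInj : ∀ i, Set.InjOn (Φ i) {v | P v = i}) :
    ∀ u v : V, rr P Φ u v → rr P Φ v u → u = v := by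
  rintro u v (h1 | ⟨h1, h1'⟩) (h2 | ⟨h2, h2'⟩)
  · omega
  · omega
  · omega
  · rw [h1] at h1' h2'
    have hq : Φ (P v) u = Φ (P v) v := le_antisymm h1' h2'
    exact hInj (P v) (by simpa [Set.mem_setOf_eq] using h1) rfl hq

theorem gset_rr {g u : V} (h : g ∈ Gset E P Φ u) :
    rr P Φ g u ∧ ¬ rr P Φ u g := by
  rcases h with h | h
  · have hlt := h.2
    refine ⟨Or.inl hlt, ?_⟩
    rintro (h' | ⟨h', _⟩) <;> omega
  · obtain ⟨he, hlt⟩ := h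
    refine ⟨Or.inr ⟨he, by rw [he]; exact le_of_lt hlt⟩, ?_⟩
    rintro (h' | ⟨h', hle⟩)
    · omega
    · rw [he] at hle; omega

theorem idx_lt_of_sorted [DecidableEq V] {l : List V} (hs : l.Pairwise (rr P Φ)) {g u : V}
    (hg : g ∈ l) (hu : u ∈ l) (h1 : rr P Φ g u) (h2 : ¬ rr P Φ u g) :
    l.idxOf g < l.idxOf u := by
  have hne : g ≠ u := by rintro rfl; exact h2 h1
  have hgl := List.idxOf_lt_length_iff.2 hg
  have hul := List.idxOf_lt_length_iff.2 hu
  rcases lt_trichotomy (l.idxOf g) (l.idxOf u) with h | h | h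
  · exact h
  · exact absurd ((List.idxOf_inj hg (y := u)).1 h) hne
  · exfalso
    have hrel := hs.rel_get_of_lt (a := ⟨l.idxOf u, hul⟩) (b := ⟨l.idxOf g, hgl⟩)
      (by simpa [Fin.mk_lt_mk] using h)
    simp only [List.get_eq_getElem, List.getElem_idxOf hgl, List.getElem_idxOf hul] at hrel
    exact h2 hrel


variable [DecidableEq V]

/-- The batch specification. -/
def BatchSpec [DecidableEq V] (E : Set (V × V)) (P : V → ℕ) (Φ : ℕ → V → ℕ)
    (ℓ : List V) (x : V) (bf bp : List V) : Prop :=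
  (bf ++ bp).Nodup ∧
  (∀ u ∈ bf ++ bp, u ∉ ℓ) ∧
  (x ∉ ℓ → x ∈ bf ++ bp) ∧
  (∀ u ∈ bf, ¬ Pois E ℓ u) ∧
  (∀ u ∈ bp, ∀ g ∈ Gset E P Φ u, g ∉ ℓ →
     (g ∈ bf ++ bp ∧ (bf ++ bp).idxOf g < (bf ++ bp).idxOf u))

theorem exists_batch [DecidableEq V] (hFin : ∀ v, (Ffwd E P v).Finite)
    (hInj : ∀ i, Set.InjOn (Φ i) {v | P v = i}) (ℓ : List V) (x : V) :
    ∃ bf bp : List V, BatchSpec E P Φ ℓ x bf bp := by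
  classical
  by_cases hx : x ∈ ℓ
  · exact ⟨[], [], by simp, by simp, fun h => absurd hx h, by simp, by simp⟩
  · have hT : (reachS E P Φ ℓ x).Finite := reach_finite hFin hInj ℓ x
    letI : IsTrans V (rr P Φ) := ⟨rr_trans P Φ⟩
    letI : Std.Antisymm (rr P Φ) := ⟨rr_antisymm hInj⟩
    letI : Std.Total (rr P Φ) := ⟨rr_total P Φ⟩
    set T := hT.toFinset with hTdef
    have hTmem : ∀ u, u ∈ T ↔ u ∈ reachS E P Φ ℓ x := fun u => hT.mem_toFinset
    set Tf := T.filter (fun v => ¬ Pois E ℓ v) with hTf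
    set Tp := T.filter (fun v => Pois E ℓ v) with hTp
    set bf := Tf.sort (rr P Φ) with hbf
    set bp := Tp.sort (rr P Φ) with hbp
    have hbfmem : ∀ u, u ∈ bf ↔ (u ∈ T ∧ ¬ Pois E ℓ u) := by
      intro u; rw [hbf, Finset.mem_sort, hTf, Finset.mem_filter]
    have hbpmem : ∀ u, u ∈ bp ↔ (u ∈ T ∧ Pois E ℓ u) := by
      intro u; rw [hbp, Finset.mem_sort, hTp, Finset.mem_filter]
    have hdisj : ∀ u, u ∈ bf → u ∈ bp → False := by
      intro u h1 h2
      exact ((hbfmem u).1 h1).2 ((hbpmem u).1 h2).2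
    refine ⟨bf, bp, ?_, ?_, ?_, ?_, ?_⟩
    · exact List.Nodup.append (Finset.sort_nodup _ _) (Finset.sort_nodup _ _)
        (fun u h1 h2 => hdisj u h1 h2)
    · intro u hu
      rcases List.mem_append.1 hu with h | h
      · exact reach_not_mem hx ((hTmem u).1 ((hbfmem u).1 h).1)
      · exact reach_not_mem hx ((hTmem u).1 ((hbpmem u).1 h).1)
    · intro _
      have hxT : x ∈ T := (hTmem x).2 (reach_self (E := E) (P := P) (Φ := Φ) ℓ x)
      by_cases hp : Pois E ℓ x
      · exact List.mem_append.2 (Or.inr ((hbpmem x).2 ⟨hxT, hp⟩))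
      · exact List.mem_append.2 (Or.inl ((hbfmem x).2 ⟨hxT, hp⟩))
    · intro u hu
      exact ((hbfmem u).1 hu).2
    · intro u hu g hg hgl
      have huT := (hbpmem u).1 hu
      have hureach : u ∈ reachS E P Φ ℓ x := (hTmem u).1 huT.1
      have hstep : stepR E P Φ ℓ g u := ⟨huT.2, hg, hgl⟩
      have hgreach : g ∈ reachS E P Φ ℓ x := reach_tail hureach hstep
      have hgT : g ∈ T := (hTmem g).2 hgreach
      have hunotbf : u ∉ bf := fun h => hdisj u h hu
      have hidxu : (bf ++ bp).idxOf u = bf.length + bp.idxOf u :=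
        List.idxOf_append_of_notMem hunotbf
      by_cases hp : Pois E ℓ g
      · -- g in the poisoned part, use the sort order
        have hgbp : g ∈ bp := (hbpmem g).2 ⟨hgT, hp⟩
        have hgnotbf : g ∉ bf := fun h => hdisj g h hgbp
        have hidxg : (bf ++ bp).idxOf g = bf.length + bp.idxOf g :=
          List.idxOf_append_of_notMem hgnotbf
        obtain ⟨h1, h2⟩ := gset_rr hg
        have hlt := idx_lt_of_sorted (Finset.pairwise_sort Tp (rr P Φ)) hgbp hu h1 h2
        have hlt' : bp.idxOf g < bp.idxOf u := hlt
        refine ⟨List.mem_append.2 (Or.inr hgbp), ?_⟩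
        rw [hidxg, hidxu]
        omega
      · -- g in the fresh part
        have hgbf : g ∈ bf := (hbfmem g).2 ⟨hgT, hp⟩
        have hidxg : (bf ++ bp).idxOf g = bf.idxOf g :=
          List.idxOf_append_of_mem hgbf
        have hlt : bf.idxOf g < bf.length := List.idxOf_lt_length_iff.2 hgbf
        refine ⟨List.mem_append.2 (Or.inl hgbf), ?_⟩
        rw [hidxg, hidxu]
        omega


end Lemmas

section Main

variable [DecidableEq V]

variable {E : Set (V × V)} {P : V → ℕ} {Φ : ℕ → V → ℕ}
variable (hFin : ∀ v, (Ffwd E P v).Finite)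
variable (hInj : ∀ i, Set.InjOn (Φ i) {v | P v = i})

noncomputable def batchF (ℓ : List V) (x : V) : List V :=
  (exists_batch hFin hInj ℓ x).choose

noncomputable def batchP (ℓ : List V) (x : V) : List V :=
  (exists_batch hFin hInj ℓ x).choose_spec.choose

noncomputable def batchL (ℓ : List V) (x : V) : List V :=
  batchF hFin hInj ℓ x ++ batchP hFin hInj ℓ x

theorem batch_spec (ℓ : List V) (x : V) :
    BatchSpec E P Φ ℓ x (batchF hFin hInj ℓ x) (batchP hFin hInj ℓ x) :=
  (exists_batch hFin hInj ℓ x).choose_spec.choose_spec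

variable (s : ℕ → V)

noncomputable def places : ℕ → List V
  | 0 => []
  | n + 1 => places n ++ batchL hFin hInj (places n) (s n)

theorem places_prefix {m n : ℕ} (h : m ≤ n) :
    places hFin hInj s m <+: places hFin hInj s n := by
  induction n with
  | zero =>
    have : m = 0 := by omega
    subst this; exact List.prefix_refl _
  | succ n ih =>
    rcases Nat.lt_or_ge m (n + 1) with h' | h'
    · exact (ih (by omega)).trans (by rw [places]; exact List.prefix_append _ _)
    · have : m = n + 1 := by omega
      subst this; exact List.prefix_refl _

theorem places_nodup (n : ℕ) : (places hFin hInj s n).Nodup := by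
  induction n with
  | zero => simp [places]
  | succ n ih =>
    rw [places]
    refine List.Nodup.append ih (batch_spec hFin hInj (places hFin hInj s n) (s n)).1 ?_
    intro u hu hub
    exact (batch_spec hFin hInj (places hFin hInj s n) (s n)).2.1 u hub hu

theorem places_mem_mono {v : V} {m n : ℕ} (h : m ≤ n)
    (hv : v ∈ places hFin hInj s m) : v ∈ places hFin hInj s n :=
  (places_prefix hFin hInj s h).subset hv

theorem placed_exists (hs : Function.Surjective s) (v : V) :
    ∃ n, v ∈ places hFin hInj s (n + 1) := by
  obtain ⟨n, rfl⟩ := hs v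
  by_cases h : s n ∈ places hFin hInj s n
  · exact ⟨n, places_mem_mono hFin hInj s (Nat.le_succ n) h⟩
  · refine ⟨n, ?_⟩
    rw [places]
    exact List.mem_append.2 (Or.inr
      ((batch_spec hFin hInj (places hFin hInj s n) (s n)).2.2.1 h))

variable (hs : Function.Surjective s)

noncomputable def stg (v : V) : ℕ := Nat.find (placed_exists hFin hInj s hs v)

theorem stg_spec (v : V) : v ∈ places hFin hInj s (stg hFin hInj s hs v + 1) :=
  Nat.find_spec (placed_exists hFin hInj s hs v)

theorem mem_places_iff {v : V} {n : ℕ} :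
    v ∈ places hFin hInj s n ↔ stg hFin hInj s hs v + 1 ≤ n := by
  constructor
  · intro h
    by_contra hc
    push_neg at hc
    cases n with
    | zero => simp [places] at h
    | succ m =>
      have hm : m < stg hFin hInj s hs v := by omega
      exact Nat.find_min (placed_exists hFin hInj s hs v) hm h
  · intro h
    exact places_mem_mono hFin hInj s h (stg_spec hFin hInj s hs v)

theorem stg_not_mem (v : V) : v ∉ places hFin hInj s (stg hFin hInj s hs v) := by
  intro h
  have := (mem_places_iff hFin hInj s hs).1 h
  omega

noncomputable def phi (v : V) : ℕ :=
  (places hFin hInj s (stg hFin hInj s hs v + 1)).idxOf v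

theorem phi_stable {v : V} {n : ℕ} (h : v ∈ places hFin hInj s n) :
    (places hFin hInj s n).idxOf v = phi hFin hInj s hs v := by
  have h1 : stg hFin hInj s hs v + 1 ≤ n := (mem_places_iff hFin hInj s hs).1 h
  obtain ⟨t, ht⟩ := places_prefix hFin hInj s (m := stg hFin hInj s hs v + 1) (n := n) h1
  rw [← ht, List.idxOf_append_of_mem (stg_spec hFin hInj s hs v)]
  rfl

theorem phi_inj : Function.Injective (phi hFin hInj s hs) := by
  intro u v h
  set n := max (stg hFin hInj s hs u + 1) (stg hFin hInj s hs v + 1) with hn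
  have hu : u ∈ places hFin hInj s n :=
    places_mem_mono hFin hInj s (le_max_left _ _) (stg_spec hFin hInj s hs u)
  have hv : v ∈ places hFin hInj s n :=
    places_mem_mono hFin hInj s (le_max_right _ _) (stg_spec hFin hInj s hs v)
  refine (List.idxOf_inj hu (y := v)).1 ?_
  rw [phi_stable hFin hInj s hs hu, phi_stable hFin hInj s hs hv, h]

theorem batch_decomp {v : V} :
    v ∈ batchL hFin hInj (places hFin hInj s (stg hFin hInj s hs v)) (s (stg hFin hInj s hs v)) ∧
    phi hFin hInj s hs v =
      (places hFin hInj s (stg hFin hInj s hs v)).length +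
      (batchL hFin hInj (places hFin hInj s (stg hFin hInj s hs v))
        (s (stg hFin hInj s hs v))).idxOf v := by
  set n := stg hFin hInj s hs v with hn
  have h1 : v ∈ places hFin hInj s (n + 1) := stg_spec hFin hInj s hs v
  have h2 : v ∉ places hFin hInj s n := stg_not_mem hFin hInj s hs v
  rw [places] at h1
  have hvb : v ∈ batchL hFin hInj (places hFin hInj s n) (s n) := by
    rcases List.mem_append.1 h1 with h | h
    · exact absurd h h2
    · exact h
  constructor
  · exact hvb
  · have : phi hFin hInj s hs v = (places hFin hInj s (n + 1)).idxOf v := rfl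
    rw [this, places, List.idxOf_append_of_notMem h2]

theorem phi_lt_of_stg_lt {u v : V}
    (h : stg hFin hInj s hs u < stg hFin hInj s hs v) :
    phi hFin hInj s hs u < phi hFin hInj s hs v := by
  have h1 : phi hFin hInj s hs u < (places hFin hInj s (stg hFin hInj s hs u + 1)).length :=
    List.idxOf_lt_length_iff.2 (stg_spec hFin hInj s hs u)
  have h2 := (batch_decomp hFin hInj s hs (v := v)).2
  have h3 : (places hFin hInj s (stg hFin hInj s hs u + 1)).length ≤
      (places hFin hInj s (stg hFin hInj s hs v)).length :=
    (places_prefix hFin hInj s (by omega)).length_le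
  omega

theorem stg_le_of_phi_lt {u v : V}
    (h : phi hFin hInj s hs u < phi hFin hInj s hs v) :
    stg hFin hInj s hs u ≤ stg hFin hInj s hs v := by
  by_contra hc
  push_neg at hc
  have := phi_lt_of_stg_lt hFin hInj s hs hc
  omega


-- `v` lies in the poisoned part of its batch
def goodT (v : V) : Prop :=
  v ∈ batchP hFin hInj (places hFin hInj s (stg hFin hInj s hs v)) (s (stg hFin hInj s hs v))

theorem good_of_pois {v : V}
    (h : Pois E (places hFin hInj s (stg hFin hInj s hs v)) v) :
    goodT hFin hInj s hs v := by
  have hvb := (batch_decomp hFin hInj s hs (v := v)).1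
  rw [batchL] at hvb
  rcases List.mem_append.1 hvb with hf | hp
  · exact absurd h
      ((batch_spec hFin hInj (places hFin hInj s (stg hFin hInj s hs v))
        (s (stg hFin hInj s hs v))).2.2.2.1 v hf)
  · exact hp

theorem good_phi_gt {u : V} (hg : goodT hFin hInj s hs u) {g : V}
    (hgg : g ∈ Gset E P Φ u) : phi hFin hInj s hs g < phi hFin hInj s hs u := by
  set n := stg hFin hInj s hs u with hn
  by_cases hmem : g ∈ places hFin hInj s n
  · have h1 : stg hFin hInj s hs g + 1 ≤ n := (mem_places_iff hFin hInj s hs).1 hmem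
    exact phi_lt_of_stg_lt hFin hInj s hs (by omega)
  · obtain ⟨hgb, hidx⟩ :=
      (batch_spec hFin hInj (places hFin hInj s n) (s n)).2.2.2.2 u hg g hgg hmem
    -- g is placed at stage n as well
    have hgmem : g ∈ places hFin hInj s (n + 1) := by
      rw [places]; exact List.mem_append.2 (Or.inr hgb)
    have hstg_g : stg hFin hInj s hs g = n := by
      have h1 : stg hFin hInj s hs g + 1 ≤ n + 1 := (mem_places_iff hFin hInj s hs).1 hgmem
      have h2 : ¬ (stg hFin hInj s hs g + 1 ≤ n) := fun hc =>
        hmem ((mem_places_iff hFin hInj s hs).2 hc)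
      omega
    have hdg := (batch_decomp hFin hInj s hs (v := g)).2
    have hdu := (batch_decomp hFin hInj s hs (v := u)).2
    rw [hstg_g] at hdg
    rw [← hn] at hdu
    rw [batchL] at hdg hdu
    omega

theorem good_succ_same {u z : V} (hg : goodT hFin hInj s hs u)
    (hstg : stg hFin hInj s hs z = stg hFin hInj s hs u)
    (hphi : phi hFin hInj s hs u < phi hFin hInj s hs z) :
    goodT hFin hInj s hs z := by
  set n := stg hFin hInj s hs u with hn
  have hzb := (batch_decomp hFin hInj s hs (v := z)).1
  rw [hstg] at hzb
  rw [batchL] at hzb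
  rcases List.mem_append.1 hzb with hf | hp
  · exfalso
    -- z in the fresh part would have batch index < length bf ≤ batch index of u
    set bf := batchF hFin hInj (places hFin hInj s n) (s n) with hbf
    set bp := batchP hFin hInj (places hFin hInj s n) (s n) with hbp
    have hnd := (batch_spec hFin hInj (places hFin hInj s n) (s n)).1
    have hdisj : bf.Disjoint bp := fun _ ha hb => (List.nodup_append.1 hnd).2.2 _ ha _ hb rfl
    have hunotbf : u ∉ bf := fun hc => hdisj hc hg
    have hidxu : (bf ++ bp).idxOf u = bf.length + bp.idxOf u :=
      List.idxOf_append_of_notMem hunotbf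
    have hidxz : (bf ++ bp).idxOf z = bf.idxOf z :=
      List.idxOf_append_of_mem hf
    have hzlt : bf.idxOf z < bf.length := List.idxOf_lt_length_iff.2 hf
    have hdu := (batch_decomp hFin hInj s hs (v := u)).2
    have hdz := (batch_decomp hFin hInj s hs (v := z)).2
    rw [hstg] at hdz
    rw [← hn] at hdu
    rw [batchL] at hdu hdz
    rw [← hbf, ← hbp] at hdu hdz
    omega
  · show z ∈ batchP hFin hInj (places hFin hInj s (stg hFin hInj s hs z))
      (s (stg hFin hInj s hs z))
    rw [hstg]
    exact hp

theorem good_step {u z : V} (hg : goodT hFin hInj s hs u)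
    (hE : (u, z) ∈ E) (hphi : phi hFin hInj s hs u < phi hFin hInj s hs z) :
    goodT hFin hInj s hs z ∧ P z ≤ P u ∧
      (P z = P u → Φ (P u) u < Φ (P u) z) := by
  have hnotg : z ∉ Gset E P Φ u := by
    intro hc
    have := good_phi_gt hFin hInj s hs hg hc
    omega
  have hPz : P z ≤ P u := by
    by_contra hc
    push_neg at hc
    exact hnotg (Or.inl ⟨hE, hc⟩)
  have hzneu : z ≠ u := by
    intro h; rw [h] at hphi; omega
  refine ⟨?_, hPz, ?_⟩
  · have hstgle : stg hFin hInj s hs u ≤ stg hFin hInj s hs z :=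
      stg_le_of_phi_lt hFin hInj s hs hphi
    rcases eq_or_lt_of_le hstgle with heq | hlt
    · exact good_succ_same hFin hInj s hs hg heq.symm hphi
    · refine good_of_pois hFin hInj s hs ⟨u, ?_, hE⟩
      exact (mem_places_iff hFin hInj s hs).2 (by omega)
  · intro hPe
    have hnotl : z ∉ Lset P Φ u := fun hc => hnotg (Or.inr hc)
    have h1 : ¬ (Φ (P u) z < Φ (P u) u) := fun hc => hnotl ⟨hPe, hc⟩
    have h2 : Φ (P u) z ≠ Φ (P u) u := by
      intro hc
      exact hzneu (hInj (P u) (by simpa [Set.mem_setOf_eq] using hPe) rfl hc)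
    omega

theorem nat_mono_stab' {g : ℕ → ℕ} (mono : Monotone g) (hbd : ∃ C, ∀ n, g n ≤ C) :
    ∃ N, ∀ n, N ≤ n → g n = g N := by
  by_contra h
  push_neg at h
  have step : ∀ N, ∃ n, g N < g n := by
    intro N
    obtain ⟨n, hn, hne⟩ := h N
    exact ⟨n, lt_of_le_of_ne (mono hn) (Ne.symm hne)⟩
  obtain ⟨C, hC⟩ := hbd
  have key : ∀ k, ∃ n, k ≤ g n := by
    intro k
    induction k with
    | zero => exact ⟨0, Nat.zero_le _⟩
    | succ k ih =>
      obtain ⟨n, hn⟩ := ih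
      obtain ⟨q, hq⟩ := step n
      exact ⟨q, by omega⟩
  obtain ⟨n, hn⟩ := key (C + 1)
  have := hC n; omega

theorem main_aux (hFin : ∀ v, (Ffwd E P v).Finite)
    (hInj : ∀ i, Set.InjOn (Φ i) {v | P v = i})
    (s : ℕ → V) (hs : Function.Surjective s)
    (hpath : ∀ i : ℕ, ¬ ∃ w : ℕ → V, Function.Injective w ∧
      ∀ n, P (w n) = i ∧ (w n, w (n + 1)) ∈ E ∧ Φ i (w n) < Φ i (w (n + 1))) :
    ∃ φ : V → ℕ, Function.Injective φ ∧
      ¬ ∃ w : ℕ → V, Function.Injective w ∧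
        ∀ n, (w n, w (n + 1)) ∈ E ∧ φ (w n) < φ (w (n + 1)) := by
  refine ⟨phi hFin hInj s hs, phi_inj hFin hInj s hs, ?_⟩
  rintro ⟨w, hwinj, hw⟩
  have hstg_mono : Monotone fun n => stg hFin hInj s hs (w n) :=
    monotone_nat_of_le_succ fun n => stg_le_of_phi_lt hFin hInj s hs (hw n).2
  have hunb : ∀ B, ∃ n, B < stg hFin hInj s hs (w n) := by
    intro B
    by_contra hc
    push_neg at hc
    have hsub : Set.range w ⊆ {v | v ∈ places hFin hInj s (B + 1)} := by
      rintro _ ⟨n, rfl⟩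
      refine (mem_places_iff hFin hInj s hs).2 ?_
      have := hc n
      omega
    exact (Set.infinite_range_of_injective hwinj)
      ((places hFin hInj s (B + 1)).finite_toSet.subset hsub)
  have hQ : ∃ n, stg hFin hInj s hs (w 0) < stg hFin hInj s hs (w n) := hunb _
  set m := Nat.find hQ with hmdef
  have hm : stg hFin hInj s hs (w 0) < stg hFin hInj s hs (w m) := Nat.find_spec hQ
  have hm0 : m ≠ 0 := by
    intro h
    rw [h] at hm
    omega
  have hmm : ¬ (stg hFin hInj s hs (w 0) < stg hFin hInj s hs (w (m - 1))) := by
    have : m - 1 < m := by omega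
    exact Nat.find_min hQ this
  have heqprev : stg hFin hInj s hs (w (m - 1)) = stg hFin hInj s hs (w 0) := by
    have h1 : stg hFin hInj s hs (w 0) ≤ stg hFin hInj s hs (w (m - 1)) :=
      hstg_mono (Nat.zero_le _)
    omega
  have hltprev : stg hFin hInj s hs (w (m - 1)) < stg hFin hInj s hs (w m) := by
    rw [heqprev]; exact hm
  have hgood0 : goodT hFin hInj s hs (w m) := by
    refine good_of_pois hFin hInj s hs ⟨w (m - 1), ?_, ?_⟩
    · refine (mem_places_iff hFin hInj s hs).2 ?_
      omega
    · have harith : m - 1 + 1 = m := by omega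
      have := (hw (m - 1)).1
      rw [harith] at this
      exact this
  have hgood : ∀ n, m ≤ n → goodT hFin hInj s hs (w n) := by
    intro n hn
    induction n with
    | zero => exact absurd (by omega : m = 0) hm0
    | succ n ih =>
      rcases Nat.lt_or_ge m (n + 1) with h | h
      · exact (good_step hFin hInj s hs (ih (by omega)) (hw n).1 (hw n).2).1
      · have : m = n + 1 := by omega
        rw [← this]
        exact hgood0
  have hPmono : ∀ n, m ≤ n → P (w (n + 1)) ≤ P (w n) := fun n hn =>
    (good_step hFin hInj s hs (hgood n hn) (hw n).1 (hw n).2).2.1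
  -- the classes stabilize
  have hg_noninc : ∀ k, P (w (m + (k + 1))) ≤ P (w (m + k)) := by
    intro k
    have harith : m + (k + 1) = (m + k) + 1 := by omega
    rw [harith]
    exact hPmono (m + k) (by omega)
  have hgle : ∀ k, P (w (m + k)) ≤ P (w m) := by
    intro k
    induction k with
    | zero => simp
    | succ k ih => exact le_trans (hg_noninc k) ih
  obtain ⟨N, hN⟩ := nat_mono_stab' (g := fun k => P (w m) - P (w (m + k)))
    (monotone_nat_of_le_succ fun k => by
      have h1 := hg_noninc k
      have h2 := hgle k
      show P (w m) - P (w (m + k)) ≤ P (w m) - P (w (m + (k + 1)))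
      omega)
    ⟨P (w m), fun k => by
      show P (w m) - P (w (m + k)) ≤ P (w m)
      omega⟩
  have hconst : ∀ k, N ≤ k → P (w (m + k)) = P (w (m + N)) := by
    intro k hk
    have h1 : P (w m) - P (w (m + k)) = P (w m) - P (w (m + N)) := hN k hk
    have h2 := hgle k
    have h3 := hgle N
    omega
  set i := P (w (m + N)) with hidef
  apply hpath i
  refine ⟨fun j => w (m + N + j), ?_, ?_⟩
  · intro a b hab
    have := hwinj hab
    omega
  · intro j
    show P (w (m + N + j)) = i ∧ (w (m + N + j), w (m + N + (j + 1))) ∈ E ∧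
      Φ i (w (m + N + j)) < Φ i (w (m + N + (j + 1)))
    have harith3 : m + N + (j + 1) = m + N + j + 1 := by omega
    rw [harith3]
    have harith1 : m + N + j = m + (N + j) := by omega
    have hc1 : P (w (m + N + j)) = i := by
      rw [harith1]; exact hconst (N + j) (by omega)
    have harith2 : m + N + j + 1 = m + (N + j + 1) := by omega
    have hc2 : P (w (m + N + j + 1)) = i := by
      rw [harith2]; exact hconst (N + j + 1) (by omega)
    refine ⟨hc1, (hw (m + N + j)).1, ?_⟩
    have hgd := good_step hFin hInj s hs (hgood (m + N + j) (by omega))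
      (hw (m + N + j)).1 (hw (m + N + j)).2
    have hPe : P (w (m + N + j + 1)) = P (w (m + N + j)) := by rw [hc1, hc2]
    have hlab := hgd.2.2 hPe
    rw [hc1] at hlab
    exact hlab

end Main


end Stmt18Aux

theorem stmt18 {V : Type*} [Countable V] [Infinite V] (E : Set (V × V))
    (P : V → ℕ)  -- the partition of `V`: the class `V_i` is `{v | P v = i}`
    (ha : ∀ i : ℕ, ∃ φi : V → ℕ, Set.InjOn φi {v | P v = i} ∧
      ¬ ∃ w : ℕ → V, Function.Injective w ∧
        ∀ n, P (w n) = i ∧ (w n, w (n + 1)) ∈ E ∧ φi (w n) < φi (w (n + 1)))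
    (hb : ∀ x : V, {y | (x, y) ∈ E ∧ P x < P y}.Finite) :
    ∃ φ : V → ℕ, Function.Injective φ ∧
      ¬ ∃ w : ℕ → V, Function.Injective w ∧
        ∀ n, (w n, w (n + 1)) ∈ E ∧ φ (w n) < φ (w (n + 1)) := by
  classical
  obtain ⟨s, hs⟩ := exists_surjective_nat V
  set Φ : ℕ → V → ℕ := fun i => (ha i).choose with hΦ
  have hInj : ∀ i, Set.InjOn (Φ i) {v | P v = i} := fun i => (ha i).choose_spec.1
  have hpath : ∀ i, ¬ ∃ w : ℕ → V, Function.Injective w ∧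
      ∀ n, P (w n) = i ∧ (w n, w (n + 1)) ∈ E ∧ Φ i (w n) < Φ i (w (n + 1)) :=
    fun i => (ha i).choose_spec.2
  have hFin : ∀ v, (Stmt18Aux.Ffwd E P v).Finite := fun v => hb v
  exact Stmt18Aux.main_aux hFin hInj s hs hpath
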